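/- Let X be a complex Hilbert space, let M₁, …, M_N (N ≥ 2) be closed subspaces of X, let P_k denote the orthogonal projection of X onto M_k, let M = M₁ ∩ … ∩ M_N with orthogonal projection P_M, and let T = P_N ⋯ P₁. Let c be a real number with 0 ≤ c ≤ 1 such that for all vectors m₁ ∈ M₁ ∩ M^⊥, …, m_N ∈ M_N ∩ M^⊥ with ∑_{k=1}^N ‖m_k‖² = 1 one has ∑_{j ≠ k} Re⟨m_j, m_k⟩ ≤ (N − 1)c. Then for every x ∈ X and every n ≥ 0, ‖T^n x − P_M x‖ ≤ (1 − 3(N−1)(1−c)/N³)^{n/2} · ‖x − P_M x‖. -/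

import Mathlib

open Filter Topology

/-- The orthogonal projection onto a subspace, as an endomorphism. -/
noncomputable def projOnto {X : Type*} [NormedAddCommGroup X] [InnerProductSpace ℂ X]
    (K : Submodule ℂ X) [K.HasOrthogonalProjection] : X →L[ℂ] X :=
  K.subtypeL.comp K.orthogonalProjection

/-- The product `P_k ⋯ P_1` of the orthogonal projections onto the first `k` of the
subspaces `M 0, …, M (N-1)` (applied in order: first `P_1 = projOnto (M 0)`, etc.);
for `k = N` this is the operator `T = P_N ⋯ P_1` of the method of cyclic alternating
projections. -/
noncomputable def cycleProd {X : Type*} [NormedAddCommGroup X] [InnerProductSpace ℂ X]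
    {N : ℕ} (M : Fin N → Submodule ℂ X) [∀ i, CompleteSpace (M i)] (k : ℕ) :
    X →L[ℂ] X :=
  (((List.ofFn fun i => projOnto (M i)).take k).reverse).prod

section Aux
variable {X : Type*} [NormedAddCommGroup X] [InnerProductSpace ℂ X]

lemma projOnto_mem (K : Submodule ℂ X) [K.HasOrthogonalProjection] (x : X) :
    projOnto K x ∈ K := (K.orthogonalProjection x).2

lemma projOnto_of_mem {K : Submodule ℂ X} [K.HasOrthogonalProjection] {x : X} (hx : x ∈ K) :
    projOnto K x = x := by
  exact K.starProjection_eq_self_iff.2 hx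

lemma sub_projOnto_mem_orth (K : Submodule ℂ X) [K.HasOrthogonalProjection] (x : X) :
    x - projOnto K x ∈ Kᗮ := K.sub_starProjection_mem_orthogonal x

lemma projOnto_pyth (K : Submodule ℂ X) [K.HasOrthogonalProjection] (x : X) :
    ‖x‖ ^ 2 = ‖projOnto K x‖ ^ 2 + ‖x - projOnto K x‖ ^ 2 := by
  have h0 : (inner ℂ (projOnto K x) (x - projOnto K x) : ℂ) = 0 :=
    Submodule.inner_right_of_mem_orthogonal (projOnto_mem K x) (sub_projOnto_mem_orth K x)
  have := norm_add_sq_eq_norm_sq_add_norm_sq_of_inner_eq_zero _ _ h0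
  simpa [sq] using this

lemma norm_projOnto_le (K : Submodule ℂ X) [K.HasOrthogonalProjection] (x : X) :
    ‖projOnto K x‖ ≤ ‖x‖ := by
  have h := projOnto_pyth K x
  nlinarith [norm_nonneg (x - projOnto K x), norm_nonneg x, norm_nonneg (projOnto K x)]

lemma projOnto_inner (K : Submodule ℂ X) [K.HasOrthogonalProjection] (x y : X) :
    (inner ℂ (projOnto K x) y : ℂ) = inner ℂ x (projOnto K y) := by
  exact Submodule.inner_starProjection_left_eq_right (K := K) x y

lemma projOnto_mem_orth_of_le {K W : Submodule ℂ X} [K.HasOrthogonalProjection] (hWK : W ≤ K)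
    {z : X} (hz : z ∈ Wᗮ) : projOnto K z ∈ Wᗮ := by
  rw [Submodule.mem_orthogonal]
  intro w hw
  have h := projOnto_inner K w z
  rw [projOnto_of_mem (hWK hw)] at h
  rw [← h]
  exact (Submodule.mem_orthogonal W z).1 hz w hw

end Aux
section CP
variable {X : Type*} [NormedAddCommGroup X] [InnerProductSpace ℂ X]
  {N : ℕ} (M : Fin N → Submodule ℂ X) [∀ i, CompleteSpace (M i)]

lemma cycleProd_zero : cycleProd M 0 = 1 := by simp [cycleProd]

lemma cycleProd_succ {k : ℕ} (hk : k < N) :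
    cycleProd M (k + 1) = projOnto (M ⟨k, hk⟩) * cycleProd M k := by
  unfold cycleProd
  have hlen : k < (List.ofFn fun i => projOnto (M i)).length := by simpa using hk
  rw [List.take_succ, List.getElem?_eq_getElem hlen]
  simp [List.prod_append, List.getElem_ofFn]

lemma cycleProd_fix {y : X} (hy : ∀ i, y ∈ M i) :
    ∀ k, k ≤ N → cycleProd M k y = y := by
  intro k
  induction k with
  | zero => intro _; rw [cycleProd_zero]; rfl
  | succ k ih =>
      intro hk
      have hk' : k < N := hk
      rw [cycleProd_succ M hk', ContinuousLinearMap.mul_apply, ih (le_of_lt hk'),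
        projOnto_of_mem (hy _)]

lemma cycleProd_mem_orth {z : X} (hz : z ∈ (⨅ i, M i : Submodule ℂ X)ᗮ) :
    ∀ k, k ≤ N → cycleProd M k z ∈ (⨅ i, M i : Submodule ℂ X)ᗮ := by
  intro k
  induction k with
  | zero => intro _; rw [cycleProd_zero]; exact hz
  | succ k ih =>
      intro hk
      have hk' : k < N := hk
      rw [cycleProd_succ M hk', ContinuousLinearMap.mul_apply]
      exact projOnto_mem_orth_of_le (iInf_le _ _) (ih (le_of_lt hk'))

lemma cycleProd_norm_le {z : X} : ∀ k, k ≤ N → ‖cycleProd M k z‖ ≤ ‖z‖ := by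
  intro k
  induction k with
  | zero => intro _; rw [cycleProd_zero]; rfl
  | succ k ih =>
      intro hk
      have hk' : k < N := hk
      rw [cycleProd_succ M hk', ContinuousLinearMap.mul_apply]
      exact (norm_projOnto_le _ _).trans (ih (le_of_lt hk'))

lemma cycleProd_norm_antitone {z : X} :
    ∀ j k, j ≤ k → k ≤ N → ‖cycleProd M k z‖ ≤ ‖cycleProd M j z‖ := by
  intro j k hjk
  induction k with
  | zero => intro _; interval_cases j; rfl
  | succ k ih =>
      intro hk
      have hk' : k < N := hk
      rcases Nat.lt_or_ge j (k+1) with h | h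
      · have := ih (Nat.lt_succ_iff.mp h) (le_of_lt hk')
        rw [cycleProd_succ M hk', ContinuousLinearMap.mul_apply]
        exact (norm_projOnto_le _ _).trans this
      · have : j = k + 1 := le_antisymm hjk h
        subst this; rfl

end CP
section Key
variable {X : Type*} [NormedAddCommGroup X] [InnerProductSpace ℂ X]
  {N : ℕ} (M : Fin N → Submodule ℂ X) [∀ i, CompleteSpace (M i)]

lemma cycleProd_pyth_step {z : X} {k : ℕ} (hk : k < N) :
    ‖cycleProd M k z‖ ^ 2
      = ‖cycleProd M (k+1) z‖ ^ 2 + ‖cycleProd M k z - cycleProd M (k+1) z‖ ^ 2 := by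
  have h := projOnto_pyth (M ⟨k, hk⟩) (cycleProd M k z)
  rw [cycleProd_succ M hk, ContinuousLinearMap.mul_apply]
  exact h

lemma cycleProd_telescope {z : X} :
    ∀ k, k ≤ N → ‖z‖ ^ 2 = ‖cycleProd M k z‖ ^ 2
      + ∑ i ∈ Finset.range k, ‖cycleProd M i z - cycleProd M (i+1) z‖ ^ 2 := by
  intro k
  induction k with
  | zero => intro _; simp [cycleProd_zero]
  | succ k ih =>
      intro hk
      have hk' : k < N := hk
      rw [Finset.sum_range_succ, ih (le_of_lt hk'), cycleProd_pyth_step M hk']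
      ring

lemma cycleProd_diff_le {z : X} :
    ∀ j k : ℕ, j ≤ k → ‖cycleProd M j z - cycleProd M k z‖
      ≤ ∑ i ∈ Finset.Ico j k, ‖cycleProd M i z - cycleProd M (i+1) z‖ := by
  intro j k hjk
  induction k, hjk using Nat.le_induction with
  | base => simp
  | succ k hjk ih =>
      rw [Finset.sum_Ico_succ_top hjk]
      have htri := dist_triangle (cycleProd M j z) (cycleProd M k z) (cycleProd M (k+1) z)
      simp only [dist_eq_norm] at htri
      linarith

end Key
section Main
variable {X : Type*} [NormedAddCommGroup X] [InnerProductSpace ℂ X]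

set_option maxHeartbeats 1000000 in
lemma key_contraction {N : ℕ} (hN : 2 ≤ N) (M : Fin N → Submodule ℂ X)
    [∀ i, CompleteSpace (M i)] [CompleteSpace (⨅ i, M i : Submodule ℂ X)]
    (c : ℝ) (hc0 : 0 ≤ c) (hc1 : c ≤ 1)
    (hch : ∀ m : Fin N → X, (∀ k, m k ∈ M k ⊓ (⨅ i, M i : Submodule ℂ X)ᗮ) →
      (∑ j : Fin N, ∑ k : Fin N, if j ≠ k then (inner ℂ (m j) (m k) : ℂ).re else 0) ≤
        ((N : ℝ) - 1) * c * ∑ k : Fin N, ‖m k‖ ^ 2)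
    {z : X} (hz : z ∈ (⨅ i, M i : Submodule ℂ X)ᗮ) :
    ‖cycleProd M N z‖ ^ 2 ≤ (1 - 3 * ((N : ℝ) - 1) * (1 - c) / (N : ℝ) ^ 3) * ‖z‖ ^ 2 := by
  set n : ℝ := (N : ℝ) with hn_def
  have hn2 : (2 : ℝ) ≤ n := by rw [hn_def]; exact_mod_cast hN
  have hn0 : (0 : ℝ) < n := by linarith
  set y : ℕ → X := fun k => cycleProd M k z with hy_def
  set D : ℝ := ∑ i ∈ Finset.range N, ‖y i - y (i+1)‖ ^ 2 with hD_def
  set L : ℝ := ∑ i ∈ Finset.range N, ‖y i - y (i+1)‖ with hL_def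
  have hD0 : 0 ≤ D := Finset.sum_nonneg fun i _ => by positivity
  have hZ0 : (0:ℝ) ≤ ‖z‖ ^ 2 := by positivity
  have hL0 : 0 ≤ L := Finset.sum_nonneg fun i _ => norm_nonneg _
  have hL2 : L ^ 2 ≤ n * D := by
    have := sq_sum_le_card_mul_sum_sq (s := Finset.range N)
      (f := fun i => ‖y i - y (i+1)‖)
    simpa [hn_def] using this
  -- difference bound
  have hdiffL : ∀ j k : ℕ, j ≤ N → k ≤ N → ‖y j - y k‖ ≤ L := by
    have main : ∀ j k : ℕ, j ≤ k → k ≤ N → ‖y j - y k‖ ≤ L := by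
      intro j k hjk hk
      refine (cycleProd_diff_le M j k hjk).trans ?_
      refine Finset.sum_le_sum_of_subset_of_nonneg ?_ fun i _ _ => norm_nonneg _
      intro i hi
      simp only [Finset.mem_Ico, Finset.mem_range] at hi ⊢
      omega
    intro j k hj hk
    rcases le_total j k with h | h
    · exact main j k h hk
    · rw [norm_sub_rev]; exact main k j h hj
  have hdiff : ∀ j k : ℕ, j ≤ N → k ≤ N → ‖y j - y k‖ ^ 2 ≤ n * D := by
    intro j k hj hk
    have h1 := hdiffL j k hj hk
    nlinarith [norm_nonneg (y j - y k)]
  -- memberships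
  have hmem : ∀ i : Fin N, y (i.val + 1) ∈ M i ⊓ (⨅ i, M i : Submodule ℂ X)ᗮ := by
    intro i
    refine ⟨?_, cycleProd_mem_orth M hz _ i.isLt⟩
    have h1 : y (i.val + 1) = projOnto (M ⟨i.val, i.isLt⟩) (y i.val) := by
      simp only [hy_def]
      rw [cycleProd_succ M i.isLt, ContinuousLinearMap.mul_apply]
    rw [h1]
    have := projOnto_mem (M ⟨i.val, i.isLt⟩) (y i.val)
    simpa using this
  have hnormk : ∀ k : ℕ, k ≤ N → ‖y k‖ ≤ ‖z‖ := fun k hk => cycleProd_norm_le M k hk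
  have hNle : ∀ k : ℕ, k ≤ N → ‖y N‖ ≤ ‖y k‖ := fun k hk =>
    cycleProd_norm_antitone M k N hk le_rfl
  -- lower bound for the cross terms
  set B : ℝ := ‖y N‖ ^ 2 - n * D / 2 with hB_def
  have hRe : ∀ j k : Fin N, j ≠ k →
      B ≤ (inner ℂ (y (j.val+1)) (y (k.val+1)) : ℂ).re := by
    intro j k _
    have hns := norm_sub_sq (𝕜 := ℂ) (E := X) (y (j.val+1)) (y (k.val+1))
    have hjv : j.val + 1 ≤ N := j.isLt
    have hkv : k.val + 1 ≤ N := k.isLt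
    have h1 := hdiff (j.val+1) (k.val+1) hjv hkv
    have h2 := hNle (j.val+1) hjv
    have h3 := hNle (k.val+1) hkv
    have h4 : RCLike.re (inner ℂ (y (j.val+1)) (y (k.val+1)) : ℂ)
        = (inner ℂ (y (j.val+1)) (y (k.val+1)) : ℂ).re := rfl
    rw [h4] at hns
    have h5 : ‖y N‖ ^ 2 ≤ ‖y (j.val+1)‖ ^ 2 := pow_le_pow_left₀ (norm_nonneg _) h2 2
    have h6 : ‖y N‖ ^ 2 ≤ ‖y (k.val+1)‖ ^ 2 := pow_le_pow_left₀ (norm_nonneg _) h3 2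
    rw [hB_def]
    linarith
  -- apply Friedrichs hypothesis
  have happ := hch (fun i => y (i.val + 1)) hmem
  have hlow : n * ((n - 1) * B)
      ≤ ∑ j : Fin N, ∑ k : Fin N, if j ≠ k then (inner ℂ (y (j.val+1)) (y (k.val+1)) : ℂ).re else 0 := by
    have hinner : ∀ j : Fin N, (n - 1) * B
        ≤ ∑ k : Fin N, if j ≠ k then (inner ℂ (y (j.val+1)) (y (k.val+1)) : ℂ).re else 0 := by
      intro j
      have step1 : ∑ k : Fin N, (if j ≠ k then B else 0)
          ≤ ∑ k : Fin N, if j ≠ k then (inner ℂ (y (j.val+1)) (y (k.val+1)) : ℂ).re else 0 := by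
        refine Finset.sum_le_sum fun k _ => ?_
        by_cases h : j ≠ k
        · simpa [h] using hRe j k h
        · simp [h]
      have step2 : ∑ k : Fin N, (if j ≠ k then B else 0) = (n - 1) * B := by
        have : ∀ k : Fin N, (if j ≠ k then B else 0) = B - (if j = k then B else 0) := by
          intro k; by_cases h : j = k <;> simp [h]
        rw [Finset.sum_congr rfl fun k _ => this k, Finset.sum_sub_distrib,
          Finset.sum_const, Finset.sum_ite_eq]
        simp only [Finset.mem_univ, if_true, Finset.card_univ, Fintype.card_fin,
          nsmul_eq_mul, hn_def]
        all_goals ring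
      linarith
    calc n * ((n - 1) * B) = ∑ _j : Fin N, (n - 1) * B := by
          rw [Finset.sum_const]
          simp only [Finset.card_univ, Fintype.card_fin, nsmul_eq_mul, hn_def]
          all_goals ring
      _ ≤ _ := Finset.sum_le_sum fun j _ => hinner j
  have hup : ∑ k : Fin N, ‖y (k.val + 1)‖ ^ 2 ≤ n * ‖z‖ ^ 2 := by
    calc ∑ k : Fin N, ‖y (k.val + 1)‖ ^ 2 ≤ ∑ _k : Fin N, ‖z‖ ^ 2 := by
          refine Finset.sum_le_sum fun k _ => ?_
          have := hnormk (k.val+1) k.isLt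
          nlinarith [norm_nonneg (y (k.val+1))]
      _ = n * ‖z‖ ^ 2 := by
          rw [Finset.sum_const]
          simp only [Finset.card_univ, Fintype.card_fin, nsmul_eq_mul, hn_def]
  have hBc : B ≤ c * ‖z‖ ^ 2 := by
    have h1 : n * ((n-1) * B) ≤ (n - 1) * c * (n * ‖z‖ ^ 2) := by
      refine le_trans hlow (le_trans happ ?_)
      have h2 : (0:ℝ) ≤ (n - 1) * c := mul_nonneg (by linarith) hc0
      exact mul_le_mul_of_nonneg_left hup h2
    have hpos : (0:ℝ) < n * (n - 1) := by nlinarith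
    nlinarith
  -- telescoping identity
  have hTel : ‖z‖ ^ 2 = ‖y N‖ ^ 2 + D := cycleProd_telescope M N le_rfl
  -- final arithmetic
  have hBc' : ‖y N‖ ^ 2 - n * D / 2 ≤ c * ‖z‖ ^ 2 := by rw [← hB_def]; exact hBc
  have key1 : (1 - c) * ‖z‖ ^ 2 ≤ (n + 2) * D / 2 := by nlinarith [hBc', hTel]
  have hgoal : 3 * (n - 1) * (1 - c) * ‖z‖ ^ 2 ≤ n ^ 3 * D := by
    have h2 : 3 * (n-1) * ((1 - c) * ‖z‖ ^ 2) ≤ 3 * (n-1) * ((n + 2) * D / 2) :=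
      mul_le_mul_of_nonneg_left key1 (by linarith)
    have h3 : (0:ℝ) ≤ 2*n^3 - 3*n^2 - 3*n + 6 := by nlinarith [sq_nonneg (n-2)]
    nlinarith [mul_nonneg hD0 h3]
  have hn3 : (0:ℝ) < n ^ 3 := by positivity
  have hfin : 3 * (n - 1) * (1 - c) / n ^ 3 * ‖z‖ ^ 2 ≤ D := by
    rw [div_mul_eq_mul_div, div_le_iff₀ hn3]
    linarith [hgoal]
  have hyNz : ‖cycleProd M N z‖ ^ 2 = ‖z‖ ^ 2 - D := by
    have h2 : ‖y N‖ ^ 2 = ‖z‖ ^ 2 - D := by linarith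
    exact h2
  rw [hyNz]
  have hexp : (1 - 3 * (n - 1) * (1 - c) / n ^ 3) * ‖z‖ ^ 2
      = ‖z‖ ^ 2 - 3 * (n - 1) * (1 - c) / n ^ 3 * ‖z‖ ^ 2 := by ring
  rw [hexp]
  linarith

end Main
/-- **Rate of convergence in terms of the Friedrichs number.** If `c ∈ [0,1]` is such
that `∑_{j ≠ k} Re⟨m_j, m_k⟩ ≤ (N-1)c` for all `m_k ∈ M_k ∩ M^⊥` with
`∑ ‖m_k‖² = 1`, then `‖Tⁿx - P_M x‖ ≤ (1 - 3(N-1)(1-c)/N³)^{n/2} ‖x - P_M x‖`. -/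
theorem alternatingProjections_rate_of_friedrichs_number
    {X : Type*} [NormedAddCommGroup X] [InnerProductSpace ℂ X] [CompleteSpace X]
    {N : ℕ} (hN : 2 ≤ N) (M : Fin N → Submodule ℂ X) [∀ i, CompleteSpace (M i)]
    [CompleteSpace (⨅ i, M i : Submodule ℂ X)]
    (c : ℝ) (hc0 : 0 ≤ c) (hc1 : c ≤ 1)
    (hc : ∀ m : Fin N → X,
      (∀ k, m k ∈ M k ⊓ (⨅ i, M i : Submodule ℂ X)ᗮ) →
      (∑ k : Fin N, ‖m k‖ ^ 2 = 1) →
      (∑ j : Fin N, ∑ k : Fin N, if j ≠ k then (inner ℂ (m j) (m k) : ℂ).re else 0) ≤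
        ((N : ℝ) - 1) * c) :
    ∀ x : X, ∀ n : ℕ,
      ‖((cycleProd M N) ^ n) x - (projOnto (⨅ i, M i)) x‖ ≤
        (1 - 3 * ((N : ℝ) - 1) * (1 - c) / (N : ℝ) ^ 3) ^ ((n : ℝ) / 2) *
          ‖x - (projOnto (⨅ i, M i)) x‖ := by
  have hn2 : (2 : ℝ) ≤ (N : ℝ) := by exact_mod_cast hN
  -- homogeneous form of the Friedrichs hypothesis
  have hch : ∀ m : Fin N → X, (∀ k, m k ∈ M k ⊓ (⨅ i, M i : Submodule ℂ X)ᗮ) →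
      (∑ j : Fin N, ∑ k : Fin N, if j ≠ k then (inner ℂ (m j) (m k) : ℂ).re else 0) ≤
        ((N : ℝ) - 1) * c * ∑ k : Fin N, ‖m k‖ ^ 2 := by
    intro m hm
    have hS0 : (0:ℝ) ≤ ∑ k : Fin N, ‖m k‖ ^ 2 :=
      Finset.sum_nonneg fun _ _ => by positivity
    rcases eq_or_lt_of_le hS0 with hS0' | hSpos
    · -- all m k vanish
      have hall : ∀ k : Fin N, m k = 0 := by
        intro k
        have h0 : ∀ i ∈ Finset.univ, (0:ℝ) ≤ ‖m (i : Fin N)‖ ^ 2 := fun i _ => by positivity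
        have := (Finset.sum_eq_zero_iff_of_nonneg h0).1 hS0'.symm k (Finset.mem_univ k)
        have : ‖m k‖ = 0 := by nlinarith [norm_nonneg (m k)]
        simpa using this
      have hL : (∑ j : Fin N, ∑ k : Fin N,
          if j ≠ k then (inner ℂ (m j) (m k) : ℂ).re else 0) = 0 := by
        refine Finset.sum_eq_zero fun j _ => Finset.sum_eq_zero fun k _ => ?_
        simp [hall j, hall k]
      rw [hL, ← hS0']
      simp
    · set S : ℝ := ∑ k : Fin N, ‖m k‖ ^ 2 with hS
      set t : ℝ := (Real.sqrt S)⁻¹ with ht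
      have hsq : Real.sqrt S > 0 := Real.sqrt_pos.2 hSpos
      have ht0 : 0 < t := inv_pos.2 hsq
      have ht2 : t ^ 2 = S⁻¹ := by
        rw [ht, ← Real.sqrt_inv]
        rw [Real.sq_sqrt (by positivity)]
      set m' : Fin N → X := fun k => (t : ℂ) • m k with hm'_def
      have hm' : ∀ k, m' k ∈ M k ⊓ (⨅ i, M i : Submodule ℂ X)ᗮ := fun k =>
        Submodule.smul_mem _ _ (hm k)
      have hnorm' : ∀ k, ‖m' k‖ ^ 2 = t ^ 2 * ‖m k‖ ^ 2 := by
        intro k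
        rw [hm'_def]
        simp only [norm_smul, Complex.norm_real, Real.norm_eq_abs, abs_of_pos ht0]
        ring
      have hsum' : ∑ k : Fin N, ‖m' k‖ ^ 2 = 1 := by
        rw [Finset.sum_congr rfl fun k _ => hnorm' k, ← Finset.mul_sum, ← hS, ht2]
        field_simp
      have happ := hc m' hm' hsum'
      have hinner : ∀ j k : Fin N,
          (inner ℂ (m' j) (m' k) : ℂ).re = t ^ 2 * (inner ℂ (m j) (m k) : ℂ).re := by
        intro j k
        rw [hm'_def]
        simp only [inner_smul_left, inner_smul_right, Complex.conj_ofReal]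
        rw [← mul_assoc, ← Complex.ofReal_mul, Complex.mul_re, Complex.ofReal_re,
          Complex.ofReal_im]
        ring
      have hLHS : (∑ j : Fin N, ∑ k : Fin N,
          if j ≠ k then (inner ℂ (m' j) (m' k) : ℂ).re else 0)
          = t ^ 2 * ∑ j : Fin N, ∑ k : Fin N,
              if j ≠ k then (inner ℂ (m j) (m k) : ℂ).re else 0 := by
        rw [Finset.mul_sum]
        refine Finset.sum_congr rfl fun j _ => ?_
        rw [Finset.mul_sum]
        refine Finset.sum_congr rfl fun k _ => ?_
        by_cases h : j ≠ k
        · simp [h, hinner j k]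
        · simp [h]
      rw [hLHS] at happ
      have hS' : S⁻¹ * S = 1 := inv_mul_cancel₀ (ne_of_gt hSpos)
      have := mul_le_mul_of_nonneg_right happ (le_of_lt hSpos)
      calc (∑ j : Fin N, ∑ k : Fin N, if j ≠ k then (inner ℂ (m j) (m k) : ℂ).re else 0)
          = (t ^ 2 * ∑ j : Fin N, ∑ k : Fin N,
              if j ≠ k then (inner ℂ (m j) (m k) : ℂ).re else 0) * S := by
            rw [ht2]; field_simp
        _ ≤ ((N:ℝ) - 1) * c * S := this
  intro x n
  set W : Submodule ℂ X := ⨅ i, M i with hW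
  set T : X →L[ℂ] X := cycleProd M N with hT
  set r : ℝ := 1 - 3 * ((N : ℝ) - 1) * (1 - c) / (N : ℝ) ^ 3 with hr
  have hNpos : (0:ℝ) < (N:ℝ) ^ 3 := by positivity
  have hr0 : 0 ≤ r := by
    rw [hr, sub_nonneg, div_le_one hNpos]
    have h1 : 3 * ((N:ℝ) - 1) * (1 - c) ≤ 3 * ((N:ℝ) - 1) := by nlinarith
    have h2 : 2 * (N:ℝ) ≤ (N:ℝ) ^ 2 := by nlinarith
    have h3 : 2 * (N:ℝ) ^ 2 ≤ (N:ℝ) ^ 3 := by nlinarith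
    linarith
  have hkey : ∀ z : X, z ∈ Wᗮ → ‖T z‖ ^ 2 ≤ r * ‖z‖ ^ 2 := fun z hz =>
    key_contraction hN M c hc0 hc1 hch hz
  have hTinv : ∀ z : X, z ∈ Wᗮ → T z ∈ Wᗮ := fun z hz =>
    cycleProd_mem_orth M hz N le_rfl
  have hpow : ∀ (k : ℕ) (z : X), z ∈ Wᗮ → ‖(T ^ k) z‖ ^ 2 ≤ r ^ k * ‖z‖ ^ 2 := by
    intro k
    induction k with
    | zero => intro z hz; simp
    | succ k ih =>
        intro z hz
        have h1 : (T ^ (k+1)) z = (T ^ k) (T z) := by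
          rw [pow_succ, ContinuousLinearMap.mul_apply]
        rw [h1]
        calc ‖(T ^ k) (T z)‖ ^ 2 ≤ r ^ k * ‖T z‖ ^ 2 := ih (T z) (hTinv z hz)
          _ ≤ r ^ k * (r * ‖z‖ ^ 2) :=
              mul_le_mul_of_nonneg_left (hkey z hz) (pow_nonneg hr0 k)
          _ = r ^ (k+1) * ‖z‖ ^ 2 := by ring
  have hPW : projOnto W x ∈ W := projOnto_mem W x
  have hin : ∀ i, projOnto W x ∈ M i := fun i => (Submodule.mem_iInf _).1 hPW i
  have hTfix : T (projOnto W x) = projOnto W x := cycleProd_fix M hin N le_rfl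
  have hfix : ∀ k : ℕ, (T ^ k) (projOnto W x) = projOnto W x := by
    intro k
    induction k with
    | zero => simp
    | succ k ih => rw [pow_succ, ContinuousLinearMap.mul_apply, hTfix, ih]
  set z : X := x - projOnto W x with hz_def
  have hzW : z ∈ Wᗮ := sub_projOnto_mem_orth W x
  have hsplit : (T ^ n) x - projOnto W x = (T ^ n) z := by
    have hx : x = z + projOnto W x := by rw [hz_def]; abel
    calc (T ^ n) x - projOnto W x = (T ^ n) (z + projOnto W x) - projOnto W x := by rw [← hx]
      _ = ((T ^ n) z + (T ^ n) (projOnto W x)) - projOnto W x := by rw [map_add]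
      _ = (T ^ n) z := by rw [hfix n]; abel
  rw [hsplit]
  have hsq := hpow n z hzW
  have hbsq : (r ^ ((n:ℝ)/2)) ^ 2 = r ^ n := by
    have h1 : ((n:ℝ)/2) * ((2:ℕ):ℝ) = (n:ℝ) := by push_cast; ring
    rw [← Real.rpow_natCast (r ^ ((n:ℝ)/2)) 2, ← Real.rpow_mul hr0, h1, Real.rpow_natCast]
  have hb : 0 ≤ r ^ ((n:ℝ)/2) * ‖z‖ :=
    mul_nonneg (Real.rpow_nonneg hr0 _) (norm_nonneg _)
  calc ‖(T ^ n) z‖ = Real.sqrt (‖(T ^ n) z‖ ^ 2) := (Real.sqrt_sq (norm_nonneg _)).symm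
    _ ≤ Real.sqrt (r ^ n * ‖z‖ ^ 2) := Real.sqrt_le_sqrt hsq
    _ = r ^ ((n:ℝ)/2) * ‖z‖ := by
        rw [show r ^ n * ‖z‖ ^ 2 = (r ^ ((n:ℝ)/2) * ‖z‖) ^ 2 by rw [mul_pow, hbsq],
          Real.sqrt_sq hb]
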